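/- For all integers r ≥ 1 and j ≥ 1, ⌊(13r - 9)/14⌋ + ⌊(13j - r - 1)/14⌋ ≥ ⌊(13j - 2)/14⌋, and the minimum over r ≥ 1 of the left-hand side equals ⌊(13j - 2)/14⌋ (attained at r = 1). -/

import Mathlib

theorem stmt2 (j : ℤ) (hj : 1 ≤ j) :
    (∀ r : ℤ, 1 ≤ r →
      (13 * r - 9).fdiv 14 + (13 * j - r - 1).fdiv 14 ≥ (13 * j - 2).fdiv 14) ∧
    ((13 * 1 - 9 : ℤ)).fdiv 14 + (13 * j - 1 - 1).fdiv 14 = (13 * j - 2).fdiv 14 := by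
  have h : ∀ a : ℤ, a.fdiv 14 = a / 14 := fun a => Int.fdiv_eq_ediv_of_nonneg a (by norm_num)
  simp only [h]
  constructor
  · intro r hr
    rcases eq_or_lt_of_le hr with h1 | h1
    · subst h1; omega
    rcases eq_or_lt_of_le (show (2:ℤ) ≤ r by omega) with h2 | h2
    · rw [← h2]; omega
    · omega
  · omega
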